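/- Fix θ>0 and let X be a Gamma^{-1}(θ) random variable. Then log X is integrable and square-integrable, with E[log X] = −ψ(θ) and Var(log X) = ψ'(θ), where ψ denotes the digamma function, i.e., ψ(θ) is the derivative at θ of t ↦ log Γ(t), and ψ'(θ) is its second derivative (the trigamma function). -/

import Mathlib

open MeasureTheory ProbabilityTheory Filter

noncomputable section

/-- Density of the inverse-gamma distribution with parameter `θ`. -/
def invGammaPdf (θ x : ℝ) : ℝ :=
  if 0 < x then (Real.Gamma θ)⁻¹ * x ^ (-θ - 1) * Real.exp (-1 / x) else 0

/-- The inverse-gamma distribution with parameter `θ`, as a measure on `ℝ`. -/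
def invGammaMeasure (θ : ℝ) : Measure ℝ :=
  MeasureTheory.volume.withDensity fun x => ENNReal.ofReal (invGammaPdf θ x)

/-- The digamma function `ψ`, as the derivative of `log Γ`. -/
def digamma (θ : ℝ) : ℝ := deriv (fun t => Real.log (Real.Gamma t)) θ

/-- The trigamma function `ψ'`, the second derivative of `log Γ`. -/
def trigamma (θ : ℝ) : ℝ := deriv (deriv fun t => Real.log (Real.Gamma t)) θ

namespace InvGammaAux

open Set Asymptotics
open scoped Topology

/-! ### Mellin-transform computations for the Gamma function and its derivatives -/

def f0 : ℝ → ℂ := fun t => Real.exp (-t)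
def f1 : ℝ → ℂ := fun t => Real.log t • f0 t
def f2 : ℝ → ℂ := fun t => Real.log t • f1 t

lemma f1_eq (t : ℝ) : f1 t = ((Real.log t * Real.exp (-t) : ℝ) : ℂ) := by
  simp [f1, f0, Complex.real_smul]

lemma f2_eq (t : ℝ) : f2 t = ((Real.log t * (Real.log t * Real.exp (-t)) : ℝ) : ℂ) := by
  simp [f2, f1, f0, Complex.real_smul]

lemma hf0_top (a : ℝ) : f0 =O[atTop] (· ^ (-a)) := by
  rw [← isBigO_norm_left]
  simp_rw [f0, Complex.norm_real, isBigO_norm_left]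
  simpa only [neg_one_mul] using (isLittleO_exp_neg_mul_rpow_atTop zero_lt_one (-a)).isBigO

lemma hf0_bot : f0 =O[𝓝[>] (0:ℝ)] (· ^ (-(0:ℝ))) := by
  have hc : Continuous f0 :=
    Complex.continuous_ofReal.comp (Real.continuous_exp.comp continuous_neg)
  have h1 : Tendsto f0 (𝓝[>] (0:ℝ)) (𝓝 (1:ℂ)) := by
    have : f0 0 = 1 := by simp [f0]
    simpa [this] using (hc.tendsto 0).mono_left nhdsWithin_le_nhds
  have h2 : f0 =O[𝓝[>] (0:ℝ)] (fun _ : ℝ => (1:ℝ)) := isBigO_const_of_tendsto h1 one_ne_zero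
  refine h2.trans (isBigO_of_le _ fun x => ?_)
  simp [Real.rpow_zero]

lemma cont_f0 : Continuous f0 :=
  Complex.continuous_ofReal.comp (Real.continuous_exp.comp continuous_neg)

lemma cont_f1 : ContinuousOn f1 (Ioi 0) := by
  refine ContinuousOn.smul (f := fun t : ℝ => Real.log t) (g := f0) ?_ cont_f0.continuousOn
  exact Real.continuousOn_log.mono fun x hx => ne_of_gt hx

lemma loc_f0 : LocallyIntegrableOn f0 (Ioi 0) volume :=
  cont_f0.continuousOn.locallyIntegrableOn measurableSet_Ioi

lemma loc_f1 : LocallyIntegrableOn f1 (Ioi 0) volume :=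
  cont_f1.locallyIntegrableOn measurableSet_Ioi

lemma mellin_step0 {θ : ℝ} (hθ : 0 < θ) :
    MellinConvergent f1 (θ:ℂ) ∧ HasDerivAt (mellin f0) (mellin f1 θ) (θ:ℂ) :=
  mellin_hasDerivAt_of_isBigO_rpow (a := θ+1) (b := 0) loc_f0 (hf0_top _)
    (by simp) hf0_bot (by simpa using hθ)

lemma mellin_step1 {θ : ℝ} (hθ : 0 < θ) :
    MellinConvergent f2 (θ:ℂ) ∧ HasDerivAt (mellin f1) (mellin f2 θ) (θ:ℂ) :=
  mellin_hasDerivAt_of_isBigO_rpow (a := θ+1) (b := θ/2)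
    loc_f1 (isBigO_rpow_top_log_smul (by linarith : θ+1 < θ+2) (hf0_top (θ+2)))
    (by simp)
    (isBigO_rpow_zero_log_smul (by linarith : (0:ℝ) < θ/2) hf0_bot)
    (by simp; linarith)

lemma mellin_ofReal (r : ℝ → ℝ) (θ : ℝ) :
    mellin (fun t => (r t : ℂ)) (θ:ℂ) = ((∫ t in Ioi 0, t ^ (θ - 1) * r t) : ℝ) := by
  rw [mellin, setIntegral_congr_fun (g := fun t : ℝ => ((t ^ (θ-1) * r t : ℝ) : ℂ))
    measurableSet_Ioi (fun t ht => ?_)]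
  · exact integral_ofReal
  · simp only [smul_eq_mul, Complex.ofReal_mul, Complex.ofReal_cpow (le_of_lt ht)]
    push_cast
    ring

lemma integrableOn_of_mellinConvergent {r : ℝ → ℝ} {θ : ℝ}
    (h : MellinConvergent (fun t => (r t : ℂ)) (θ:ℂ)) :
    IntegrableOn (fun t => t ^ (θ - 1) * r t) (Ioi 0) := by
  refine (h.re).congr ?_
  filter_upwards [ae_restrict_mem measurableSet_Ioi] with t ht
  have : (t:ℂ) ^ ((θ:ℂ) - 1) • ((r t : ℝ):ℂ) = ((t ^ (θ-1) * r t : ℝ) : ℂ) := by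
    simp only [smul_eq_mul, Complex.ofReal_mul, Complex.ofReal_cpow (le_of_lt ht)]
    push_cast
    ring
  rw [this]
  simp

lemma gamma_hasDerivAt {t : ℝ} (ht : 0 < t) :
    HasDerivAt Real.Gamma ((mellin f1 (t:ℂ)).re) t := by
  have h1 : HasDerivAt Complex.GammaIntegral (mellin f1 (t:ℂ)) (t:ℂ) := by
    have h := Complex.hasDerivAt_GammaIntegral (s := (t:ℂ)) (by simpa using ht)
    convert h using 1
    simp only [mellin, f1_eq, smul_eq_mul, Complex.ofReal_mul]
  have h2 : HasDerivAt Complex.Gamma (mellin f1 (t:ℂ)) (t:ℂ) := by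
    refine h1.congr_of_eventuallyEq ?_
    have hmem : {z : ℂ | 0 < z.re} ∈ 𝓝 (t:ℂ) :=
      (Complex.continuous_re.isOpen_preimage _ isOpen_Ioi).mem_nhds (by simpa using ht)
    filter_upwards [hmem] with z hz
    exact Complex.Gamma_eq_integral hz
  exact h2.real_of_complex

lemma logGamma_hasDerivAt {t : ℝ} (ht : 0 < t) :
    HasDerivAt (fun u => Real.log (Real.Gamma u))
      ((mellin f1 (t:ℂ)).re / Real.Gamma t) t := by
  have h := (Real.hasDerivAt_log (Real.Gamma_pos_of_pos ht).ne').comp t (gamma_hasDerivAt ht)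
  simpa [Function.comp_def, div_eq_inv_mul, mul_comm] using h

lemma digamma_eq {θ : ℝ} (hθ : 0 < θ) :
    digamma θ = (mellin f1 (θ:ℂ)).re / Real.Gamma θ := (logGamma_hasDerivAt hθ).deriv

lemma trigamma_eq {θ : ℝ} (hθ : 0 < θ) :
    trigamma θ = (mellin f2 (θ:ℂ)).re / Real.Gamma θ
      - ((mellin f1 (θ:ℂ)).re / Real.Gamma θ)^2 := by
  have hev : deriv (fun t => Real.log (Real.Gamma t)) =ᶠ[𝓝 θ]
      fun t => (mellin f1 (t:ℂ)).re / Real.Gamma t := by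
    filter_upwards [isOpen_Ioi.mem_nhds hθ] with t ht
    exact (logGamma_hasDerivAt ht).deriv
  have hd : HasDerivAt (fun t : ℝ => (mellin f1 (t:ℂ)).re / Real.Gamma t)
      (((mellin f2 (θ:ℂ)).re * Real.Gamma θ - (mellin f1 (θ:ℂ)).re * (mellin f1 (θ:ℂ)).re)
        / Real.Gamma θ ^ 2) θ :=
    HasDerivAt.div ((mellin_step1 hθ).2.real_of_complex) (gamma_hasDerivAt hθ)
      (Real.Gamma_pos_of_pos hθ).ne'
  have h0 : Real.Gamma θ ≠ 0 := (Real.Gamma_pos_of_pos hθ).ne'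
  unfold trigamma
  rw [hev.deriv_eq, hd.deriv]
  field_simp

/-! ### Density manipulations -/

lemma measurable_invGammaPdf (θ : ℝ) : Measurable (invGammaPdf θ) := by
  unfold invGammaPdf
  refine Measurable.ite (measurableSet_lt measurable_const measurable_id) ?_ measurable_const
  fun_prop

lemma invGammaPdf_nonneg {θ : ℝ} (hθ : 0 < θ) (x : ℝ) : 0 ≤ invGammaPdf θ x := by
  unfold invGammaPdf
  split
  · have := Real.Gamma_pos_of_pos hθ
    positivity
  · exact le_refl _

lemma comp_inv_integral (g : ℝ → ℝ) :
    ∫ x in Ioi (0:ℝ), x ^ (-2:ℝ) * g x⁻¹ = ∫ y in Ioi (0:ℝ), g y := by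
  rw [← integral_comp_rpow_Ioi g (p := -1) (by norm_num)]
  refine setIntegral_congr_fun measurableSet_Ioi fun x hx => ?_
  rw [smul_eq_mul, Real.rpow_neg_one]
  norm_num

lemma comp_inv_integrableOn {g : ℝ → ℝ} (hg : IntegrableOn g (Ioi 0)) :
    IntegrableOn (fun x => x ^ (-2:ℝ) * g x⁻¹) (Ioi 0) := by
  have h := (integrableOn_Ioi_comp_rpow_iff g (p := -1) (by norm_num)).mpr hg
  refine h.congr_fun (fun x hx => ?_) measurableSet_Ioi
  beta_reduce
  rw [smul_eq_mul, Real.rpow_neg_one]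
  norm_num

lemma key_eq {θ : ℝ} (k : ℕ) {x : ℝ} (hx : 0 < x) :
    x ^ (-2:ℝ) * ((x⁻¹) ^ (θ-1) * (Real.log x⁻¹ ^ k * Real.exp (-x⁻¹)))
      = (-1:ℝ)^k * (Real.log x ^ k * (x ^ (-θ-1) * Real.exp (-1/x))) := by
  have harg : -x⁻¹ = -1/x := by field_simp
  have hxx : x ^ (-2:ℝ) * x ^ (-(θ-1)) = x ^ (-θ-1) := by
    rw [← Real.rpow_add hx]; congr 1; ring
  rw [Real.log_inv, Real.inv_rpow hx.le, ← Real.rpow_neg hx.le, neg_pow, harg, ← hxx]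
  ring

lemma pdf_eq_on {θ : ℝ} (k : ℕ) :
    ∀ x ∈ Ioi (0:ℝ), Real.log x ^ k * invGammaPdf θ x
      = ((-1:ℝ)^k * (Real.Gamma θ)⁻¹)
          * (x ^ (-2:ℝ) * ((x⁻¹) ^ (θ-1) * (Real.log x⁻¹ ^ k * Real.exp (-x⁻¹)))) := by
  intro x hx
  rw [invGammaPdf, if_pos (mem_Ioi.mp hx), key_eq (θ := θ) k (mem_Ioi.mp hx)]
  have hsq : ((-1:ℝ)^k) * ((-1:ℝ)^k) = 1 := by rw [← mul_pow]; norm_num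
  linear_combination
    (-(Real.Gamma θ)⁻¹ * (Real.log x ^ k * (x ^ (-θ-1) * Real.exp (-1/x)))) * hsq

lemma pdf_zero_off {θ : ℝ} (k : ℕ) :
    ∀ x ∉ Ioi (0:ℝ), Real.log x ^ k * invGammaPdf θ x = 0 := by
  intro x hx
  rw [invGammaPdf, if_neg (by simpa using hx), mul_zero]

lemma pdf_integral {θ : ℝ} (k : ℕ) :
    ∫ x, Real.log x ^ k * invGammaPdf θ x
      = ((-1:ℝ)^k * (Real.Gamma θ)⁻¹)
          * ∫ y in Ioi (0:ℝ), y ^ (θ-1) * (Real.log y ^ k * Real.exp (-y)) := by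
  rw [← setIntegral_eq_integral_of_forall_compl_eq_zero (pdf_zero_off k),
    setIntegral_congr_fun measurableSet_Ioi (pdf_eq_on k), integral_const_mul,
    comp_inv_integral (fun y => y ^ (θ-1) * (Real.log y ^ k * Real.exp (-y)))]

lemma pdf_integrable {θ : ℝ} (k : ℕ)
    (hg : IntegrableOn (fun y => y ^ (θ-1) * (Real.log y ^ k * Real.exp (-y))) (Ioi 0)) :
    Integrable (fun x => Real.log x ^ k * invGammaPdf θ x) := by
  rw [← integrableOn_iff_integrable_of_support_subset
    (s := Ioi 0) (fun x hx => by_contra fun hc => hx (pdf_zero_off k x hc))]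
  have h : IntegrableOn
      (fun x => ((-1:ℝ)^k * (Real.Gamma θ)⁻¹)
        * (x ^ (-2:ℝ) * ((x⁻¹) ^ (θ-1) * (Real.log x⁻¹ ^ k * Real.exp (-x⁻¹))))) (Ioi 0) :=
    (comp_inv_integrableOn hg).const_mul ((-1:ℝ)^k * (Real.Gamma θ)⁻¹)
  exact h.congr_fun (fun x hx => (pdf_eq_on k x hx).symm) measurableSet_Ioi

/-! ### Pushing forward -/

variable {Ω : Type*} [MeasurableSpace Ω] {P : Measure Ω} {X : Ω → ℝ}

lemma integral_comp_pdf {θ : ℝ} (hθ : 0 < θ) (hX : Measurable X)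
    (hlaw : Measure.map X P = invGammaMeasure θ) (h : ℝ → ℝ) (hm : Measurable h) :
    ∫ ω, h (X ω) ∂P = ∫ x, h x * invGammaPdf θ x := by
  rw [← integral_map hX.aemeasurable hm.aestronglyMeasurable, hlaw, invGammaMeasure]
  have hd : (fun x => ENNReal.ofReal (invGammaPdf θ x))
      = fun x => ((invGammaPdf θ x).toNNReal : ENNReal) := rfl
  rw [hd, integral_withDensity_eq_integral_smul ((measurable_invGammaPdf θ).real_toNNReal) h]
  refine integral_congr_ae (ae_of_all _ fun x => ?_)
  show (invGammaPdf θ x).toNNReal • h x = h x * invGammaPdf θ x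
  rw [NNReal.smul_def, Real.coe_toNNReal _ (invGammaPdf_nonneg hθ x), smul_eq_mul, mul_comm]

lemma integrable_comp_pdf {θ : ℝ} (hθ : 0 < θ) (hX : Measurable X)
    (hlaw : Measure.map X P = invGammaMeasure θ) {h : ℝ → ℝ} (hm : Measurable h)
    (hint : Integrable (fun x => h x * invGammaPdf θ x)) :
    Integrable (fun ω => h (X ω)) P := by
  have hI : Integrable h (Measure.map X P) := by
    rw [hlaw, invGammaMeasure,
      integrable_withDensity_iff ((measurable_invGammaPdf θ).ennreal_ofReal)
        (ae_of_all _ fun x => ENNReal.ofReal_lt_top)]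
    refine hint.congr (ae_of_all _ fun x => ?_)
    show h x * invGammaPdf θ x = h x * (ENNReal.ofReal (invGammaPdf θ x)).toReal
    rw [ENNReal.toReal_ofReal (invGammaPdf_nonneg hθ x)]
  exact (integrable_map_measure hm.aestronglyMeasurable hX.aemeasurable).mp hI

end InvGammaAux

open InvGammaAux Set

/-- **Log-moments of an inverse-gamma random variable.** If `X ~ Gamma⁻¹(θ)` then
`log X` is integrable and square-integrable, with `E[log X] = -ψ(θ)` and
`Var(log X) = ψ'(θ)`. -/
theorem invGamma_log_moments
    {Ω : Type*} [MeasurableSpace Ω] (P : Measure Ω) [IsProbabilityMeasure P]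
    (θ : ℝ) (hθ : 0 < θ) (X : Ω → ℝ) (hX : Measurable X)
    (hlaw : Measure.map X P = invGammaMeasure θ) :
    Integrable (fun ω => Real.log (X ω)) P ∧
    MemLp (fun ω => Real.log (X ω)) 2 P ∧
    ∫ ω, Real.log (X ω) ∂P = -digamma θ ∧
    variance (fun ω => Real.log (X ω)) P = trigamma θ := by
  have hΓpos := Real.Gamma_pos_of_pos hθ
  -- the three Gamma-type integrals
  set J : ℕ → ℝ := fun k => ∫ y in Ioi (0:ℝ), y ^ (θ-1) * (Real.log y ^ k * Real.exp (-y))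
    with hJdef
  -- identification of J 1 and J 2 with Mellin transforms
  have hf1 : (fun t : ℝ => ((Real.log t * Real.exp (-t) : ℝ) : ℂ)) = f1 :=
    funext fun t => (f1_eq t).symm
  have hf2 : (fun t : ℝ => ((Real.log t * (Real.log t * Real.exp (-t)) : ℝ) : ℂ)) = f2 :=
    funext fun t => (f2_eq t).symm
  have hB : (mellin f1 (θ:ℂ)).re = J 1 := by
    rw [← hf1, mellin_ofReal, Complex.ofReal_re, hJdef]
    refine setIntegral_congr_fun measurableSet_Ioi fun t ht => by ring
  have hC : (mellin f2 (θ:ℂ)).re = J 2 := by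
    rw [← hf2, mellin_ofReal, Complex.ofReal_re, hJdef]
    refine setIntegral_congr_fun measurableSet_Ioi fun t ht => by ring
  -- integrability of the three integrands
  have hI1 : IntegrableOn (fun y : ℝ => y ^ (θ-1) * (Real.log y ^ 1 * Real.exp (-y))) (Ioi 0) := by
    have := integrableOn_of_mellinConvergent (r := fun t => Real.log t * Real.exp (-t))
      (θ := θ) (by rw [hf1]; exact (mellin_step0 hθ).1)
    refine this.congr_fun (fun y hy => by ring) measurableSet_Ioi
  have hI2 : IntegrableOn (fun y : ℝ => y ^ (θ-1) * (Real.log y ^ 2 * Real.exp (-y))) (Ioi 0) := by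
    have := integrableOn_of_mellinConvergent
      (r := fun t => Real.log t * (Real.log t * Real.exp (-t)))
      (θ := θ) (by rw [hf2]; exact (mellin_step1 hθ).1)
    refine this.congr_fun (fun y hy => by ring) measurableSet_Ioi
  -- expectations
  have hm1 : Measurable fun x : ℝ => Real.log x ^ 1 := (Real.measurable_log.pow_const 1)
  have hm2 : Measurable fun x : ℝ => Real.log x ^ 2 := (Real.measurable_log.pow_const 2)
  have hE1 : ∫ ω, Real.log (X ω) ^ 1 ∂P = -((Real.Gamma θ)⁻¹ * J 1) := by
    rw [integral_comp_pdf hθ hX hlaw _ hm1, pdf_integral 1]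
    ring
  have hE2 : ∫ ω, Real.log (X ω) ^ 2 ∂P = (Real.Gamma θ)⁻¹ * J 2 := by
    rw [integral_comp_pdf hθ hX hlaw _ hm2, pdf_integral 2]
    ring
  -- integrability of log X and (log X)^2
  have hint2 : Integrable (fun ω => Real.log (X ω) ^ 2) P :=
    integrable_comp_pdf hθ hX hlaw hm2 (pdf_integrable 2 hI2)
  have haesm : AEStronglyMeasurable (fun ω => Real.log (X ω)) P :=
    (Real.measurable_log.comp hX).aestronglyMeasurable
  have hmem : MemLp (fun ω => Real.log (X ω)) 2 P :=
    (memLp_two_iff_integrable_sq haesm).mpr hint2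
  have hint1 : Integrable (fun ω => Real.log (X ω)) P := hmem.integrable one_le_two
  refine ⟨hint1, hmem, ?_, ?_⟩
  · have := hE1
    simp only [pow_one] at this
    rw [this, digamma_eq hθ, hB]
    field_simp
  · rw [variance_eq_sub hmem, trigamma_eq hθ, hB, hC]
    have h1 : ∫ ω, ((fun ω => Real.log (X ω)) ^ 2) ω ∂P = (Real.Gamma θ)⁻¹ * J 2 := by
      simpa [Pi.pow_apply] using hE2
    have h2 : ∫ ω, Real.log (X ω) ∂P = -((Real.Gamma θ)⁻¹ * J 1) := by
      simpa [pow_one] using hE1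
    rw [h1, h2]
    field_simp

end
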